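/- Let $g_1,\dots,g_p$ be complex numbers and let $h = (h_{i_1\cdots i_{\ell-1}})$ be a skew-symmetric array of complex numbers with indices in $\{1,\dots,p\}$ satisfying the Koszul condition $\sum_{i=1}^p g_i h_{i i_1\cdots i_{\ell-2}} = 0$ for all $i_1,\dots,i_{\ell-2}$ (vacuous if $\ell=1$). Define $(\bar g\wedge h)_{i_1\cdots i_\ell} = -\sum_{\sigma=1}^{\ell}(-1)^{\sigma}\bar g_{i_\sigma} h_{i_1\cdots \hat i_\sigma \cdots i_\ell}$. Then $\frac{1}{\ell!}\sum_{i_1,\dots,i_\ell}|(\bar g\wedge h)_{i_1\cdots i_\ell}|^2 = \big(\sum_i |g_i|^2\big)\cdot \frac{1}{(\ell-1)!}\sum_{i_1,\dots,i_{\ell-1}}|h_{i_1\cdots i_{\ell-1}}|^2$. -/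

import Mathlib

open Complex Finset

private lemma neg_one_pow_mul_self (n : ℕ) : ((-1 : ℂ) ^ n) * ((-1 : ℂ) ^ n) = 1 := by
  rw [← mul_pow]; norm_num

/-- Norm identity for the wedge with `g̅`: if `h` is a skew-symmetric array of
degree `m = ℓ - 1` satisfying the Koszul condition `ι_g h = 0`, then
`‖g̅ ∧ h‖² = ‖g‖² ‖h‖²` (with the normalized norms `1/ℓ! ∑ |·|²`). -/
theorem wedge_norm_identity (p m : ℕ) (hpm : m + 1 ≤ p)
    (g : Fin p → ℂ) (h : (Fin m → Fin p) → ℂ)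
    (hskew : ∀ (w : Fin m → Fin p) (a b : Fin m), a ≠ b →
      h (w ∘ Equiv.swap a b) = - h w)
    (hkoszul : ∀ (w : Fin m → Fin p) (j : Fin m),
      ∑ i : Fin p, g i * h (Function.update w j i) = 0) :
    ((Nat.factorial (m + 1) : ℝ))⁻¹ *
      ∑ v : Fin (m + 1) → Fin p,
        ‖∑ σ : Fin (m + 1),
          (-1 : ℂ) ^ (σ : ℕ) * (starRingEnd ℂ) (g (v σ)) * h (v ∘ σ.succAbove)‖ ^ 2
    = (∑ i : Fin p, ‖g i‖ ^ 2) *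
        (((Nat.factorial m : ℝ))⁻¹ * ∑ w : Fin m → Fin p, ‖h w‖ ^ 2) := by
  classical
  set T : (Fin (m+1) → Fin p) → Fin (m+1) → ℂ :=
    fun v σ => (-1 : ℂ) ^ (σ : ℕ) * (starRingEnd ℂ) (g (v σ)) * h (v ∘ σ.succAbove) with hT
  set A : ℝ := ∑ i : Fin p, ‖g i‖ ^ 2 with hA
  set B : ℝ := ∑ w : Fin m → Fin p, ‖h w‖ ^ 2 with hB
  -- diagonal terms
  have diag : ∀ σ : Fin (m+1),
      ∑ v : Fin (m+1) → Fin p, T v σ * (starRingEnd ℂ) (T v σ) = ((A * B : ℝ) : ℂ) := by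
    intro σ
    rw [← Equiv.sum_comp (Fin.insertNthEquiv (fun _ => Fin p) σ)
      (fun v => T v σ * (starRingEnd ℂ) (T v σ))]
    have hstep : ∀ x : Fin p × (Fin m → Fin p),
        T ((Fin.insertNthEquiv (fun _ => Fin p) σ) x) σ *
          (starRingEnd ℂ) (T ((Fin.insertNthEquiv (fun _ => Fin p) σ) x) σ)
        = ((‖g x.1‖ ^ 2 : ℝ) : ℂ) * ((‖h x.2‖ ^ 2 : ℝ) : ℂ) := by
      rintro ⟨a, w⟩
      simp only [hT, Fin.insertNthEquiv, Equiv.coe_fn_mk, Fin.insertNth_apply_same,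
        Fin.insertNth_comp_succAbove, map_mul, map_pow, map_neg, map_one,
        Complex.conj_conj]
      have h1 : ((‖g a‖ ^ 2 : ℝ) : ℂ) = (starRingEnd ℂ) (g a) * g a := by
        rw [← Complex.normSq_eq_norm_sq, ← Complex.mul_conj]; ring
      have h2 : ((‖h w‖ ^ 2 : ℝ) : ℂ) = h w * (starRingEnd ℂ) (h w) := by
        rw [← Complex.normSq_eq_norm_sq, ← Complex.mul_conj]
      rw [h1, h2]
      calc (-1:ℂ)^(σ:ℕ) * (starRingEnd ℂ) (g a) * h w * ((-1:ℂ)^(σ:ℕ) * g a * (starRingEnd ℂ) (h w))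
          = ((-1:ℂ)^(σ:ℕ) * (-1:ℂ)^(σ:ℕ)) * ((starRingEnd ℂ) (g a) * g a * (h w * (starRingEnd ℂ) (h w))) := by ring
        _ = (starRingEnd ℂ) (g a) * g a * (h w * (starRingEnd ℂ) (h w)) := by
            rw [neg_one_pow_mul_self]; ring
    rw [Fintype.sum_congr _ _ hstep, Fintype.sum_prod_type]
    simp only [← Finset.sum_mul, ← Finset.mul_sum]
    push_cast [hA, hB]
    rfl
  -- off-diagonal terms vanish by the Koszul condition
  have off : ∀ σ τ : Fin (m+1), σ ≠ τ →
      ∑ v : Fin (m+1) → Fin p, T v σ * (starRingEnd ℂ) (T v τ) = 0 := by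
    intro σ τ hst
    obtain ⟨k, hk⟩ := Fin.exists_succAbove_eq hst
    obtain ⟨j, hj⟩ := Fin.exists_succAbove_eq (Ne.symm hst)
    have hd : Fin p := ⟨0, by omega⟩
    -- base array independent of the value at position σ
    set W : (Fin m → Fin p) → Fin m → Fin p :=
      fun w => (σ.insertNth hd w) ∘ τ.succAbove with hW
    have hupd : ∀ (a : Fin p) (w : Fin m → Fin p),
        (σ.insertNth a w) ∘ τ.succAbove = Function.update (W w) k a := by
      intro a w
      funext i
      by_cases hik : i = k
      · subst hik
        simp [hW, Function.comp, hk, Fin.insertNth_apply_same]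
      · have hne : τ.succAbove i ≠ σ := by
          rw [← hk]; exact fun hcon => hik (Fin.succAbove_right_injective hcon)
        obtain ⟨l, hl⟩ := Fin.exists_succAbove_eq hne
        simp [hW, Function.comp, Function.update_of_ne hik, ← hl,
          Fin.insertNth_apply_succAbove]
    rw [← Equiv.sum_comp (Fin.insertNthEquiv (fun _ => Fin p) σ)
      (fun v => T v σ * (starRingEnd ℂ) (T v τ))]
    rw [Fintype.sum_prod_type]
    rw [Finset.sum_comm]
    apply Finset.sum_eq_zero
    intro w _
    have hterm : ∀ a : Fin p,
        T ((Fin.insertNthEquiv (fun _ => Fin p) σ) (a, w)) σ *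
          (starRingEnd ℂ) (T ((Fin.insertNthEquiv (fun _ => Fin p) σ) (a, w)) τ)
        = ((-1:ℂ)^(σ:ℕ) * (-1:ℂ)^(τ:ℕ) * h w * g (w j)) *
            (starRingEnd ℂ) (g a * h (Function.update (W w) k a)) := by
      intro a
      have hvτ : Fin.insertNth (α := fun _ => Fin p) σ a w τ = w j := by
        rw [← hj]; exact Fin.insertNth_apply_succAbove (α := fun _ => Fin p) σ a w j
      simp only [hT, Fin.insertNthEquiv, Equiv.coe_fn_mk, Fin.insertNth_apply_same,
        Fin.insertNth_comp_succAbove, hvτ, hupd a w, map_mul, map_pow, map_neg, map_one,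
        Complex.conj_conj]
      ring
    rw [Finset.sum_congr rfl (fun a _ => hterm a), ← Finset.mul_sum, ← map_sum]
    rw [hkoszul (W w) k]
    simp
  -- the key complex identity
  have key : ∑ v : Fin (m+1) → Fin p,
      (∑ σ : Fin (m+1), T v σ) * (starRingEnd ℂ) (∑ τ : Fin (m+1), T v τ)
      = (((m + 1 : ℝ) * (A * B) : ℝ) : ℂ) := by
    have expand : ∀ v : Fin (m+1) → Fin p,
        (∑ σ : Fin (m+1), T v σ) * (starRingEnd ℂ) (∑ τ : Fin (m+1), T v τ)
        = ∑ σ : Fin (m+1), ∑ τ : Fin (m+1), T v σ * (starRingEnd ℂ) (T v τ) := by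
      intro v
      rw [map_sum, Finset.sum_mul_sum]
    rw [Finset.sum_congr rfl (fun v _ => expand v)]
    rw [Finset.sum_comm]
    have swap2 : ∀ σ : Fin (m+1),
        ∑ v : Fin (m+1) → Fin p, ∑ τ : Fin (m+1), T v σ * (starRingEnd ℂ) (T v τ)
        = ∑ τ : Fin (m+1), ∑ v : Fin (m+1) → Fin p, T v σ * (starRingEnd ℂ) (T v τ) :=
      fun σ => Finset.sum_comm
    rw [Finset.sum_congr rfl (fun σ _ => swap2 σ)]
    have inner : ∀ σ : Fin (m+1),
        ∑ τ : Fin (m+1), ∑ v : Fin (m+1) → Fin p, T v σ * (starRingEnd ℂ) (T v τ)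
        = ((A * B : ℝ) : ℂ) := by
      intro σ
      rw [Finset.sum_eq_single σ (fun τ _ hτ => off σ τ (Ne.symm hτ))
        (fun hmem => absurd (Finset.mem_univ σ) hmem)]
      exact diag σ
    rw [Finset.sum_congr rfl (fun σ _ => inner σ), Finset.sum_const, Finset.card_univ,
      Fintype.card_fin, nsmul_eq_mul]
    push_cast
    ring
  -- pass from complex identity to real statement
  have habs : ∀ v : Fin (m+1) → Fin p,
      ‖∑ σ : Fin (m+1), T v σ‖ ^ 2
      = ((∑ σ : Fin (m+1), T v σ) * (starRingEnd ℂ) (∑ τ : Fin (m+1), T v τ)).re := by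
    intro v
    rw [Complex.mul_conj, ← Complex.normSq_eq_norm_sq, Complex.ofReal_re]
  calc ((Nat.factorial (m + 1) : ℝ))⁻¹ *
        ∑ v : Fin (m + 1) → Fin p,
          ‖∑ σ : Fin (m + 1),
            (-1 : ℂ) ^ (σ : ℕ) * (starRingEnd ℂ) (g (v σ)) * h (v ∘ σ.succAbove)‖ ^ 2
      = ((Nat.factorial (m + 1) : ℝ))⁻¹ *
        (∑ v : Fin (m+1) → Fin p,
          (∑ σ : Fin (m+1), T v σ) * (starRingEnd ℂ) (∑ τ : Fin (m+1), T v τ)).re := by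
        rw [Complex.re_sum]
        congr 1
        exact Finset.sum_congr rfl (fun v _ => habs v)
    _ = ((Nat.factorial (m + 1) : ℝ))⁻¹ * ((m + 1 : ℝ) * (A * B)) := by
        rw [key, Complex.ofReal_re]
    _ = A * (((Nat.factorial m : ℝ))⁻¹ * B) := by
        rw [Nat.factorial_succ]
        have hm : (Nat.factorial m : ℝ) ≠ 0 := by
          exact_mod_cast Nat.factorial_ne_zero m
        push_cast
        field_simp
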